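/- Let V₁ = span{e₂,…,eₙ,f₁,…,fₙ} ⊂ 𝔽_p^{2n}, a coordinate hyperplane, and let β_k(p,n) be the number of k-dimensional isotropic subspaces of 𝔽_p^{2n} contained in V₁. Then β₀(p,n) = 1, β₁(p,n) = (p^{2n-1}−1)/(p−1), and for 2 ≤ k ≤ n, β_k(p,n) = (p^k(p^{n-k}+1)·C(n−1,k)_p + C(n−1,k−1)_p) · ∏_{i=1}^{k-1}(p^{n-i}+1), where C(m,k)_p is the Gaussian (p-binomial) coefficient; in particular each β_k(p,n) is a polynomial in p with non-negative integer coefficients. -/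

import Mathlib

open Matrix

/-- The standard symplectic matrix `Δ = [[0, Iₙ], [-Iₙ, 0]]`. -/
def Delta (p n : ℕ) : Matrix (Fin n ⊕ Fin n) (Fin n ⊕ Fin n) (ZMod p) :=
  Matrix.fromBlocks 0 1 (-1) 0

/-- The Gaussian (`q`-)binomial coefficient, via the `q`-Pascal recurrence
`C(n+1,k+1)_q = C(n,k)_q + q^(k+1) C(n,k+1)_q`. -/
def gaussBinom (q : ℕ) : ℕ → ℕ → ℕ
  | _, 0 => 1
  | 0, _ + 1 => 0
  | n + 1, k + 1 => gaussBinom q n k + q ^ (k + 1) * gaussBinom q n (k + 1)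

namespace IsoCnt

lemma gb_zero (q m : ℕ) : gaussBinom q m 0 = 1 := by cases m <;> rfl

/-- `∏ i < k, (q^m - q^i)` over ℤ. -/
def F (q : ℤ) (m k : ℕ) : ℤ := ∏ i ∈ Finset.range k, (q ^ m - q ^ i)

lemma F_succ (q : ℤ) (m k : ℕ) : F q m (k + 1) = F q m k * (q ^ m - q ^ k) :=
  Finset.prod_range_succ _ _

lemma F_succ_succ (q : ℤ) (m k : ℕ) :
    F q (m + 1) (k + 1) = (q ^ (m + 1) - 1) * q ^ k * F q m k := by
  rw [F, Finset.prod_range_succ']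
  have : ∀ i ∈ Finset.range k, q ^ (m+1) - q ^ (i+1) = q * (q ^ m - q ^ i) := by
    intro i _; ring
  rw [Finset.prod_congr rfl this, Finset.prod_mul_distrib, Finset.prod_const,
    Finset.card_range, F]
  ring

lemma gb_mul_F (q : ℕ) : ∀ m k : ℕ, (gaussBinom q m k : ℤ) * F q k k = F q m k := by
  intro m
  induction m with
  | zero =>
    intro k
    match k with
    | 0 => simp [gaussBinom, F]
    | k + 1 =>
      rw [show gaussBinom q 0 (k+1) = 0 from rfl]
      rw [Nat.cast_zero, zero_mul]
      symm
      exact Finset.prod_eq_zero (Finset.mem_range.2 (Nat.succ_pos k)) (by simp)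
  | succ m ih =>
    intro k
    match k with
    | 0 => simp [gaussBinom, gb_zero, F]
    | k + 1 =>
      rw [show gaussBinom q (m+1) (k+1) = gaussBinom q m k + q ^ (k+1) * gaussBinom q m (k+1) from rfl]
      have h1 := ih k
      have h2 := ih (k + 1)
      rw [F_succ q m k] at h2
      rw [F_succ_succ q k k] at h2
      rw [F_succ_succ q m k, F_succ_succ q k k]
      push_cast
      linear_combination (((q:ℤ)^(k+1) - 1) * (q:ℤ)^k) * h1 + ((q:ℤ)^(k+1)) * h2

lemma F_self_ne_zero {q : ℤ} (hq : 2 ≤ q) (k : ℕ) : F q k k ≠ 0 := by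
  rw [F]
  apply Finset.prod_ne_zero_iff.2
  intro i hi
  have hik : i < k := Finset.mem_range.1 hi
  have : q ^ i < q ^ k := pow_lt_pow_right₀ (by omega) hik
  omega

/-- Key multiplicative identity for Gaussian binomials, over ℤ. -/
lemma gb_step {q : ℕ} (hq : 2 ≤ q) (m k : ℕ) :
    (gaussBinom q m (k + 1) : ℤ) * ((q : ℤ) ^ (k + 1) - 1) * (q : ℤ) ^ k
      = (gaussBinom q m k : ℤ) * ((q : ℤ) ^ m - (q : ℤ) ^ k) := by
  have h1 := gb_mul_F q m (k + 1)
  have h2 := gb_mul_F q m k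
  rw [F_succ q m k] at h1
  rw [F_succ_succ q k k] at h1
  have hne : F (q : ℤ) k k ≠ 0 := F_self_ne_zero (by exact_mod_cast hq) k
  apply mul_right_cancel₀ hne
  linear_combination h1 - ((q:ℤ)^m - (q:ℤ)^k) * h2

lemma gb_one (q : ℕ) : ∀ m : ℕ, gaussBinom q m 1 = ∑ i ∈ Finset.range m, q ^ i := by
  intro m
  induction m with
  | zero => rfl
  | succ m ih =>
    rw [show gaussBinom q (m+1) 1 = gaussBinom q m 0 + q ^ 1 * gaussBinom q m 1 from rfl]
    rw [gb_zero, ih, Finset.sum_range_succ', Finset.mul_sum]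
    simp [pow_succ, mul_comm]
    omega

end IsoCnt

namespace IsoCnt

variable (p n : ℕ) [Fact p.Prime]

local notation "K" => ZMod p
local notation "V" => (Fin n ⊕ Fin n → ZMod p)

/-- The symplectic bilinear form. -/
noncomputable def Bf : LinearMap.BilinForm (ZMod p) (Fin n ⊕ Fin n → ZMod p) :=
  Matrix.toLinearMap₂' (ZMod p) (Delta p n)

lemma Bf_apply (v w : V) : Bf p n v w = v ⬝ᵥ (Delta p n *ᵥ w) :=
  Matrix.toLinearMap₂'_apply' _ _ _

lemma mulVec_Delta (w : V) :
    Delta p n *ᵥ w = Sum.elim (fun i => w (Sum.inr i)) (fun i => -(w (Sum.inl i))) := by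
  ext j
  cases j with
  | inl j =>
    simp [Delta, Matrix.mulVec, dotProduct, Fintype.sum_sum_type,
      Matrix.fromBlocks_apply₁₁, Matrix.fromBlocks_apply₁₂, Matrix.one_apply]
  | inr j =>
    simp [Delta, Matrix.mulVec, dotProduct, Fintype.sum_sum_type,
      Matrix.fromBlocks_apply₂₁, Matrix.fromBlocks_apply₂₂, Matrix.one_apply]

lemma Bf_apply' (v w : V) :
    Bf p n v w = ∑ i, v (Sum.inl i) * w (Sum.inr i) - ∑ i, v (Sum.inr i) * w (Sum.inl i) := by
  rw [Bf_apply, mulVec_Delta]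
  simp [dotProduct, Fintype.sum_sum_type, Finset.sum_sub_distrib, mul_comm]
  ring_nf

lemma Bf_alt (v : V) : Bf p n v v = 0 := by
  rw [Bf_apply']
  rw [Finset.sum_congr rfl (fun i _ => mul_comm (v (Sum.inl i)) (v (Sum.inr i)))]
  ring

lemma Bf_skew (v w : V) : Bf p n v w = - Bf p n w v := by
  rw [Bf_apply', Bf_apply']
  rw [Finset.sum_congr rfl (fun i _ => mul_comm (v (Sum.inl i)) (w (Sum.inr i))),
    Finset.sum_congr rfl (fun i _ => mul_comm (v (Sum.inr i)) (w (Sum.inl i)))]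
  ring

lemma Bf_refl : (Bf p n).IsRefl := by
  intro v w h
  rw [Bf_skew, h, neg_zero]

lemma Bf_nondeg : (Bf p n).Nondegenerate := by
  refine (LinearMap.IsRefl.nondegenerate_iff_separatingLeft (Bf_refl p n)).2 ?_
  intro v h
  funext j
  cases j with
  | inl j =>
    have := h (Pi.single (Sum.inr j) 1)
    rw [Bf_apply'] at this
    simpa [Pi.single_apply] using this
  | inr j =>
    have := h (Pi.single (Sum.inl j) 1)
    rw [Bf_apply'] at this
    simpa [Pi.single_apply] using this

open Submodule

variable (hn : 0 < n)

/-- The index of the coordinate that must vanish. -/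
def i0 : Fin n ⊕ Fin n := Sum.inl ⟨0, hn⟩

/-- The distinguished vector `f₁`. -/
def ev : V := Pi.single (Sum.inr ⟨0, hn⟩) (1 : ZMod p)

/-- The hyperplane. -/
noncomputable def H : Submodule K V :=
  LinearMap.ker (LinearMap.proj (R := ZMod p) (φ := fun _ => ZMod p) (i0 n hn))

lemma mem_H {v : V} : v ∈ H p n hn ↔ v (i0 n hn) = 0 := Iff.rfl

lemma ev_mem_H : ev p n hn ∈ H p n hn := by
  rw [mem_H]
  simp [ev, i0, Pi.single_apply]

lemma Bf_right_ev (v : V) : Bf p n v (ev p n hn) = v (i0 n hn) := by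
  rw [Bf_apply']
  simp [ev, i0, Pi.single_apply]

lemma Bf_left_ev (v : V) : Bf p n (ev p n hn) v = - v (i0 n hn) := by
  rw [Bf_skew, Bf_right_ev]

lemma inf_orth (W : Submodule K V) :
    H p n hn ⊓ (Bf p n).orthogonal W = (Bf p n).orthogonal (W ⊔ K ∙ ev p n hn) := by
  ext v
  simp only [Submodule.mem_inf, LinearMap.BilinForm.mem_orthogonal_iff, LinearMap.BilinForm.isOrtho_def]
  constructor
  · rintro ⟨hv, ho⟩ u hu
    rcases Submodule.mem_sup.1 hu with ⟨w, hw, z, hz, rfl⟩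
    rcases Submodule.mem_span_singleton.1 hz with ⟨c, rfl⟩
    rw [map_add, LinearMap.add_apply, ho w hw, _root_.map_smul, LinearMap.smul_apply,
      Bf_left_ev, (mem_H p n hn).1 hv]
    simp
  · intro h
    refine ⟨?_, fun w hw => h w (Submodule.mem_sup_left hw)⟩
    have := h (ev p n hn) (Submodule.mem_sup_right (Submodule.mem_span_singleton_self _))
    rw [Bf_left_ev, neg_eq_zero] at this
    exact (mem_H p n hn).2 this

lemma finrank_V : Module.finrank K V = 2 * n := by
  rw [Module.finrank_pi]
  simp [Fintype.card_sum]
  ring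

lemma finrank_orth (W : Submodule K V) :
    Module.finrank K ((Bf p n).orthogonal W) + Module.finrank K W = 2 * n := by
  have h := LinearMap.BilinForm.finrank_orthogonal (Bf_nondeg p n) W
  have h2 : Module.finrank K W ≤ Module.finrank K V := Submodule.finrank_le W
  rw [finrank_V p n] at *
  omega

lemma card_submodule (W : Submodule K V) :
    Nat.card W = p ^ Module.finrank K W := by
  haveI : Fintype W := Fintype.ofFinite _
  rw [Nat.card_eq_fintype_card, @Module.card_eq_pow_finrank (ZMod p) _ _ _ _ _ _, ZMod.card]

end IsoCnt

namespace IsoCnt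
section Chunk3
variable (p n : ℕ) [Fact p.Prime] (hn : 0 < n)
local notation "K" => ZMod p
local notation "V" => (Fin n ⊕ Fin n → ZMod p)

lemma card_diff {U W : Submodule K V} (h : W ≤ U) :
    Nat.card {v : V // v ∈ U ∧ v ∉ W} + p ^ Module.finrank K W
      = p ^ Module.finrank K U := by
  classical
  have e1 : {v : V // v ∈ U ∧ v ∉ W} ≃ {u : ↥U // ¬ (u.1 ∈ W)} :=
    { toFun := fun v => ⟨⟨v.1, v.2.1⟩, v.2.2⟩
      invFun := fun u => ⟨u.1.1, u.1.2, u.2⟩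
      left_inv := fun v => rfl
      right_inv := fun u => rfl }
  have e2 : {u : ↥U // u.1 ∈ W} ≃ ↥W :=
    { toFun := fun u => ⟨u.1.1, u.2⟩
      invFun := fun w => ⟨⟨w.1, h w.2⟩, w.2⟩
      left_inv := fun u => rfl
      right_inv := fun w => rfl }
  have e3 : ({u : ↥U // u.1 ∈ W} ⊕ {u : ↥U // ¬ (u.1 ∈ W)}) ≃ ↥U :=
    Equiv.sumCompl _
  have := Nat.card_congr e3
  rw [Nat.card_sum, Nat.card_congr e2, card_submodule] at this
  rw [card_submodule p n U] at this
  rw [Nat.card_congr e1]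
  omega

lemma span_orth_right {k : ℕ} {t : Fin k → V} (h : ∀ i j, Bf p n (t i) (t j) = 0)
    {u : V} (hu : u ∈ Submodule.span K (Set.range t)) (i : Fin k) :
    Bf p n (t i) u = 0 := by
  have hle : Submodule.span K (Set.range t) ≤ LinearMap.ker (Bf p n (t i)) := by
    rw [Submodule.span_le]
    rintro _ ⟨j, rfl⟩
    exact h i j
  exact hle hu

lemma span_orth_left {k : ℕ} {t : Fin k → V} {u : V} (h : ∀ i, Bf p n (t i) u = 0)
    {w : V} (hw : w ∈ Submodule.span K (Set.range t)) :
    Bf p n w u = 0 := by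
  have hle : Submodule.span K (Set.range t) ≤ LinearMap.ker ((Bf p n).flip u) := by
    rw [Submodule.span_le]
    rintro _ ⟨j, rfl⟩
    exact h j
  exact hle hw

lemma span_isotropic {k : ℕ} {t : Fin k → V} (h : ∀ i j, Bf p n (t i) (t j) = 0) :
    ∀ v ∈ Submodule.span K (Set.range t), ∀ w ∈ Submodule.span K (Set.range t),
      Bf p n v w = 0 := by
  intro v hv w hw
  exact span_orth_left p n (fun i => span_orth_right p n h hw i) hv

lemma mem_orth_span {k : ℕ} {t : Fin k → V} {u : V} :
    u ∈ (Bf p n).orthogonal (Submodule.span K (Set.range t)) ↔ ∀ i, Bf p n (t i) u = 0 := by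
  constructor
  · intro h i
    exact h (t i) (Submodule.subset_span (Set.mem_range_self i))
  · intro h w hw
    exact span_orth_left p n h hw

end Chunk3
end IsoCnt

namespace IsoCnt
section Chunk4
variable (p n : ℕ) [Fact p.Prime] (hn : 0 < n)
local notation "K" => ZMod p
local notation "V" => (Fin n ⊕ Fin n → ZMod p)

instance : Finite (Submodule K V) :=
  Finite.of_injective (fun W => (W : Set (Fin n ⊕ Fin n → ZMod p))) SetLike.coe_injective

def tcond (k : ℕ) (t : Fin k → V) : Prop :=
  LinearIndependent K t ∧ (∀ i j, Bf p n (t i) (t j) = 0) ∧ (∀ i, t i ∈ H p n hn)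

def scond (k : ℕ) (W : Submodule K V) : Prop :=
  (∀ v ∈ W, ∀ w ∈ W, Bf p n v w = 0) ∧ W ≤ H p n hn ∧ Module.finrank K W = k

lemma scond_span {k : ℕ} {t : Fin k → V} (h : tcond p n hn k t) :
    scond p n hn k (Submodule.span K (Set.range t)) := by
  refine ⟨span_isotropic p n h.2.1, ?_, ?_⟩
  · rw [Submodule.span_le]; rintro _ ⟨i, rfl⟩; exact h.2.2 i
  · rw [finrank_span_eq_card h.1]; simp

lemma tcount (k : ℕ) (P : Submodule K V → Prop) :
    Nat.card {t : Fin k → V // tcond p n hn k t ∧ P (Submodule.span K (Set.range t))}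
      = Nat.card {W : Submodule K V // scond p n hn k W ∧ P W}
          * ∏ i ∈ Finset.range k, (p ^ k - p ^ i) := by
  classical
  set f : {t : Fin k → V // tcond p n hn k t ∧ P (Submodule.span K (Set.range t))}
      → {W : Submodule K V // scond p n hn k W ∧ P W} :=
    fun t => ⟨Submodule.span K (Set.range t.1), scond_span p n hn t.2.1, t.2.2⟩ with hf
  have key : ∀ W : {W : Submodule K V // scond p n hn k W ∧ P W},
      Nat.card {t // f t = W} = ∏ i ∈ Finset.range k, (p ^ k - p ^ i) := by
    intro W
    have hWr : Module.finrank K ↥W.1 = k := W.2.1.2.2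
    have forward : ∀ t : {t // f t = W}, ∀ i, t.1.1 i ∈ W.1 := by
      intro t i
      have hs : Submodule.span K (Set.range t.1.1) = W.1 := congrArg Subtype.val t.2
      rw [← hs]
      exact Submodule.subset_span (Set.mem_range_self i)
    have e : {t // f t = W} ≃ {s : Fin k → ↥W.1 // LinearIndependent K s} := by
      refine Equiv.ofBijective
        (fun t => ⟨fun i => ⟨t.1.1 i, forward t i⟩,
          LinearIndependent.of_comp W.1.subtype (by exact t.1.2.1.1)⟩) ⟨?_, ?_⟩
      · intro t t' htt
        apply Subtype.ext
        apply Subtype.ext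
        funext i
        exact congrArg Subtype.val (congrFun (congrArg Subtype.val htt) i)
      · rintro ⟨s, hs⟩
        have hind : LinearIndependent K (fun i => (s i : Fin n ⊕ Fin n → ZMod p)) := by
          have := hs.map' W.1.subtype (Submodule.ker_subtype W.1)
          exact this
        have hle : Submodule.span K (Set.range fun i => (s i : Fin n ⊕ Fin n → ZMod p)) ≤ W.1 := by
          rw [Submodule.span_le]
          rintro _ ⟨i, rfl⟩
          exact (s i).2
        have hsp : Submodule.span K (Set.range fun i => (s i : Fin n ⊕ Fin n → ZMod p)) = W.1 := by
          apply Submodule.eq_of_le_of_finrank_le hle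
          rw [hWr, finrank_span_eq_card hind]
          simp
        have htc : tcond p n hn k (fun i => (s i : Fin n ⊕ Fin n → ZMod p)) := by
          refine ⟨hind, fun i j => W.2.1.1 _ ((s i).2) _ ((s j).2), fun i => W.2.1.2.1 (s i).2⟩
        refine ⟨⟨⟨fun i => (s i : Fin n ⊕ Fin n → ZMod p), htc, ?_⟩, ?_⟩, ?_⟩
        · rw [hsp]; exact W.2.2
        · exact Subtype.ext hsp
        · apply Subtype.ext; funext i; rfl
    rw [Nat.card_congr e]
    have hcard := @card_linearIndependent (ZMod p) ↥W.1 _ _ _ _ _ k (by rw [hWr])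
    rw [hcard, ZMod.card, hWr, ← Fin.prod_univ_eq_prod_range]
  haveI instS : Fintype {W : Submodule K V // scond p n hn k W ∧ P W} := Fintype.ofFinite _
  haveI instF : ∀ W : {W : Submodule K V // scond p n hn k W ∧ P W},
      Fintype {t // f t = W} := fun W => Fintype.ofFinite _
  calc Nat.card {t : Fin k → V // tcond p n hn k t ∧ P (Submodule.span K (Set.range t))}
      = Nat.card (Σ W : {W : Submodule K V // scond p n hn k W ∧ P W}, {t // f t = W}) :=
        (Nat.card_congr (Equiv.sigmaFiberEquiv f)).symm
    _ = ∑ W : {W : Submodule K V // scond p n hn k W ∧ P W}, Nat.card {t // f t = W} := by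
        rw [Nat.card_eq_fintype_card, Fintype.card_sigma]
        exact Finset.sum_congr rfl fun W _ => (Nat.card_eq_fintype_card).symm
    _ = ∑ _W : {W : Submodule K V // scond p n hn k W ∧ P W},
          ∏ i ∈ Finset.range k, (p ^ k - p ^ i) := Finset.sum_congr rfl fun W _ => key W
    _ = Nat.card {W : Submodule K V // scond p n hn k W ∧ P W}
          * ∏ i ∈ Finset.range k, (p ^ k - p ^ i) := by
        rw [Finset.sum_const, Finset.card_univ, Nat.card_eq_fintype_card, smul_eq_mul]

end Chunk4
end IsoCnt

namespace IsoCnt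
section Chunk5
variable (p n : ℕ) [Fact p.Prime] (hn : 0 < n)
local notation "K" => ZMod p
local notation "V" => (Fin n ⊕ Fin n → ZMod p)

/-- `U(W) = V₁ ∩ W^⊥`. -/
noncomputable def UW (W : Submodule K V) : Submodule K V :=
  H p n hn ⊓ (Bf p n).orthogonal W

lemma mem_UW_span {k : ℕ} {t : Fin k → V} {v : V} :
    v ∈ UW p n hn (Submodule.span K (Set.range t)) ↔
      v ∈ H p n hn ∧ ∀ i, Bf p n (t i) v = 0 := by
  rw [UW, Submodule.mem_inf, mem_orth_span]

lemma tcond_snoc {k : ℕ} {t : Fin k → V} {v : V} :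
    tcond p n hn (k+1) (Fin.snoc t v) ↔
      tcond p n hn k t ∧ (v ∈ UW p n hn (Submodule.span K (Set.range t)) ∧
        v ∉ Submodule.span K (Set.range t)) := by
  unfold tcond
  rw [linearIndependent_fin_snoc]
  constructor
  · rintro ⟨⟨hi, hv⟩, horth, hH⟩
    have hBt : ∀ i j, Bf p n (t i) (t j) = 0 := fun i j => by
      simpa [Fin.snoc_castSucc] using horth i.castSucc j.castSucc
    refine ⟨⟨hi, hBt, fun i => by simpa [Fin.snoc_castSucc] using hH i.castSucc⟩, ?_, hv⟩
    rw [mem_UW_span]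
    refine ⟨by simpa [Fin.snoc_last] using hH (Fin.last k), fun i => ?_⟩
    simpa [Fin.snoc_castSucc, Fin.snoc_last] using horth i.castSucc (Fin.last k)
  · rintro ⟨⟨hi, hBt, hHt⟩, hvU, hv⟩
    obtain ⟨hvH, hvB⟩ := (mem_UW_span p n hn).1 hvU
    refine ⟨⟨hi, hv⟩, ?_, ?_⟩
    · intro i j
      induction i using Fin.lastCases with
      | last =>
        induction j using Fin.lastCases with
        | last => simpa [Fin.snoc_last] using Bf_alt p n v
        | cast j =>
          rw [Fin.snoc_last, Fin.snoc_castSucc, Bf_skew, hvB j, neg_zero]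
      | cast i =>
        induction j using Fin.lastCases with
        | last => rw [Fin.snoc_last, Fin.snoc_castSucc]; exact hvB i
        | cast j => rw [Fin.snoc_castSucc, Fin.snoc_castSucc]; exact hBt i j
    · intro i
      induction i using Fin.lastCases with
      | last => rw [Fin.snoc_last]; exact hvH
      | cast i => rw [Fin.snoc_castSucc]; exact hHt i

lemma span_snoc {k : ℕ} (t : Fin k → V) (v : V) :
    Submodule.span K (Set.range (Fin.snoc t v : Fin (k+1) → V))
      = Submodule.span K (Set.range t) ⊔ (Submodule.span K {v}) := by
  have hr : Set.range (Fin.snoc t v : Fin (k+1) → V) = insert v (Set.range t) := by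
    ext x
    constructor
    · rintro ⟨i, rfl⟩
      induction i using Fin.lastCases with
      | last => rw [Fin.snoc_last]; exact Set.mem_insert _ _
      | cast i => rw [Fin.snoc_castSucc]; exact Set.mem_insert_of_mem _ ⟨i, rfl⟩
    · rintro (rfl | ⟨i, rfl⟩)
      · exact ⟨Fin.last k, Fin.snoc_last _ _⟩
      · exact ⟨i.castSucc, Fin.snoc_castSucc _ _ _⟩
  rw [hr, Submodule.span_insert, sup_comm]

end Chunk5
end IsoCnt

namespace IsoCnt
section Chunk6
variable (p n : ℕ) [Fact p.Prime] (hn : 0 < n)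
local notation "K" => ZMod p
local notation "V" => (Fin n ⊕ Fin n → ZMod p)

def prodSubtypeSigma {α β : Type*} (P1 : α → Prop) (P2 : α → β → Prop) :
    {x : α × β // P1 x.1 ∧ P2 x.1 x.2} ≃ Σ a : {a // P1 a}, {b // P2 a.1 b} where
  toFun x := ⟨⟨x.1.1, x.2.1⟩, ⟨x.1.2, x.2.2⟩⟩
  invFun s := ⟨(s.1.1, s.2.1), s.1.2, s.2.2⟩
  left_inv x := rfl
  right_inv s := rfl

noncomputable instance fintypeTup (k : ℕ) : Fintype {t : Fin k → V // tcond p n hn k t} :=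
  Fintype.ofFinite _

lemma tcard_succ (k : ℕ) (P : Submodule K V → Prop) :
    Nat.card {t : Fin (k+1) → V // tcond p n hn (k+1) t ∧ P (Submodule.span K (Set.range t))}
      = ∑ t : {t : Fin k → V // tcond p n hn k t},
          Nat.card {v : V // v ∈ UW p n hn (Submodule.span K (Set.range t.1)) ∧
            v ∉ Submodule.span K (Set.range t.1) ∧
            P (Submodule.span K (Set.range t.1) ⊔ (Submodule.span K {v}))} := by
  classical
  have e1 : {t : Fin (k+1) → V // tcond p n hn (k+1) t ∧ P (Submodule.span K (Set.range t))}
      ≃ {x : (Fin k → V) × V // tcond p n hn (k+1) (Fin.snoc x.1 x.2) ∧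
          P (Submodule.span K (Set.range (Fin.snoc x.1 x.2 : Fin (k+1) → V)))} :=
    { toFun := fun t => ⟨(Fin.init t.1, t.1 (Fin.last k)), by
        rw [Fin.snoc_init_self]; exact t.2⟩
      invFun := fun x => ⟨Fin.snoc x.1.1 x.1.2, x.2⟩
      left_inv := fun t => Subtype.ext (Fin.snoc_init_self t.1)
      right_inv := fun x => Subtype.ext (by simp) }
  have e2 : {x : (Fin k → V) × V // tcond p n hn (k+1) (Fin.snoc x.1 x.2) ∧
          P (Submodule.span K (Set.range (Fin.snoc x.1 x.2 : Fin (k+1) → V)))}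
      ≃ {x : (Fin k → V) × V // tcond p n hn k x.1 ∧
          (x.2 ∈ UW p n hn (Submodule.span K (Set.range x.1)) ∧
            x.2 ∉ Submodule.span K (Set.range x.1) ∧
            P (Submodule.span K (Set.range x.1) ⊔ (Submodule.span K {x.2})))} := by
    apply Equiv.subtypeEquivRight
    intro x
    rw [tcond_snoc, span_snoc]
    tauto
  have e3 := prodSubtypeSigma (fun a : Fin k → V => tcond p n hn k a)
    (fun a b => b ∈ UW p n hn (Submodule.span K (Set.range a)) ∧
      b ∉ Submodule.span K (Set.range a) ∧
      P (Submodule.span K (Set.range a) ⊔ (Submodule.span K {b})))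
  rw [Nat.card_congr ((e1.trans e2).trans e3)]
  haveI : ∀ t : {t : Fin k → V // tcond p n hn k t},
      Fintype {v : V // v ∈ UW p n hn (Submodule.span K (Set.range t.1)) ∧
        v ∉ Submodule.span K (Set.range t.1) ∧
        P (Submodule.span K (Set.range t.1) ⊔ (Submodule.span K {v}))} :=
    fun t => Fintype.ofFinite _
  rw [Nat.card_eq_fintype_card, Fintype.card_sigma]
  exact Finset.sum_congr rfl fun t _ => (Nat.card_eq_fintype_card).symm

end Chunk6
end IsoCnt

namespace IsoCnt
section Chunk7
variable (p n : ℕ) [Fact p.Prime] (hn : 0 < n)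
local notation "K" => ZMod p
local notation "V" => (Fin n ⊕ Fin n → ZMod p)

lemma ev_ne_zero : ev p n hn ≠ 0 := by
  intro h
  have := congrFun h (Sum.inr ⟨0, hn⟩)
  rw [ev] at this
  simp at this

lemma W_le_UW {k : ℕ} {W : Submodule K V} (hW : scond p n hn k W) : W ≤ UW p n hn W := by
  intro w hw
  refine Submodule.mem_inf.2 ⟨hW.2.1 hw, ?_⟩
  intro u hu
  exact hW.1 u hu w hw

lemma ev_mem_UW {k : ℕ} {W : Submodule K V} (hW : scond p n hn k W) : ev p n hn ∈ UW p n hn W := by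
  refine Submodule.mem_inf.2 ⟨ev_mem_H p n hn, ?_⟩
  intro u hu
  rw [Bf_right_ev]
  exact hW.2.1 hu

lemma UW_eq_orth (W : Submodule K V) :
    UW p n hn W = (Bf p n).orthogonal (W ⊔ Submodule.span K {ev p n hn}) := inf_orth p n hn W

lemma UW_finrank (W : Submodule K V) :
    Module.finrank K (UW p n hn W)
      + Module.finrank K (W ⊔ Submodule.span K {ev p n hn} : Submodule K V) = 2 * n := by
  rw [UW_eq_orth]
  exact finrank_orth p n _

lemma sup_ev_of_mem {W : Submodule K V} (he : ev p n hn ∈ W) :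
    W ⊔ Submodule.span K {ev p n hn} = W := by
  rw [sup_eq_left]
  rwa [Submodule.span_singleton_le_iff_mem]

lemma finrank_sup_ev_of_not_mem {W : Submodule K V} (he : ev p n hn ∉ W) :
    Module.finrank K (W ⊔ Submodule.span K {ev p n hn} : Submodule K V)
      = Module.finrank K W + 1 := by
  have hd : W ⊓ Submodule.span K {ev p n hn} = ⊥ := by
    rw [eq_bot_iff]
    rintro x ⟨hxW, hxe⟩
    rcases Submodule.mem_span_singleton.1 hxe with ⟨c, rfl⟩
    rcases eq_or_ne c 0 with rfl | hc
    · simp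
    · exfalso
      apply he
      have : c⁻¹ • (c • ev p n hn) ∈ W := Submodule.smul_mem _ _ hxW
      rwa [smul_smul, inv_mul_cancel₀ hc, one_smul] at this
  have h := Submodule.finrank_sup_add_finrank_inf_eq W (Submodule.span K {ev p n hn})
  rw [hd, finrank_span_singleton (ev_ne_zero p n hn)] at h
  simpa using h

lemma fiber_A_of_mem {k : ℕ} {W : Submodule K V} (hW : scond p n hn k W)
    (he : ev p n hn ∈ W) :
    Nat.card {v : V // v ∈ UW p n hn W ∧ v ∉ W ∧
        ev p n hn ∈ W ⊔ Submodule.span K {v}} + p ^ k = p ^ (2 * n - k) := by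
  have e : {v : V // v ∈ UW p n hn W ∧ v ∉ W ∧ ev p n hn ∈ W ⊔ Submodule.span K {v}}
      ≃ {v : V // v ∈ UW p n hn W ∧ v ∉ W} :=
    Equiv.subtypeEquivRight fun v => by
      constructor
      · rintro ⟨h1, h2, _⟩; exact ⟨h1, h2⟩
      · rintro ⟨h1, h2⟩; exact ⟨h1, h2, Submodule.mem_sup_left he⟩
  rw [Nat.card_congr e]
  have hfr := UW_finrank p n hn W
  rw [sup_ev_of_mem p n hn he, hW.2.2] at hfr
  have hc := card_diff p n (W_le_UW p n hn hW)
  rw [hW.2.2] at hc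
  have : Module.finrank K (UW p n hn W) = 2 * n - k := by omega
  rw [this] at hc
  exact hc

lemma fiber_B_of_mem {k : ℕ} {W : Submodule K V} (hW : scond p n hn k W)
    (he : ev p n hn ∈ W) :
    Nat.card {v : V // v ∈ UW p n hn W ∧ v ∉ W ∧
        ev p n hn ∉ W ⊔ Submodule.span K {v}} = 0 := by
  rw [Nat.card_eq_zero]
  left
  refine ⟨fun v => ?_⟩
  exact v.2.2.2 (Submodule.mem_sup_left he)

lemma fiber_A_of_not_mem {k : ℕ} {W : Submodule K V} (hW : scond p n hn k W)
    (he : ev p n hn ∉ W) :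
    Nat.card {v : V // v ∈ UW p n hn W ∧ v ∉ W ∧
        ev p n hn ∈ W ⊔ Submodule.span K {v}} + p ^ k = p ^ (k + 1) := by
  have hsup_le : W ⊔ Submodule.span K {ev p n hn} ≤ UW p n hn W :=
    sup_le (W_le_UW p n hn hW) ((Submodule.span_singleton_le_iff_mem _ _).2 (ev_mem_UW p n hn hW))
  have e : {v : V // v ∈ UW p n hn W ∧ v ∉ W ∧ ev p n hn ∈ W ⊔ Submodule.span K {v}}
      ≃ {v : V // v ∈ (W ⊔ Submodule.span K {ev p n hn} : Submodule K V) ∧ v ∉ W} :=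
    Equiv.subtypeEquivRight fun v => by
      constructor
      · rintro ⟨h1, h2, h3⟩
        rcases Submodule.mem_sup.1 h3 with ⟨w, hw, z, hz, hwz⟩
        rcases Submodule.mem_span_singleton.1 hz with ⟨c, rfl⟩
        have hc : c ≠ 0 := by
          rintro rfl
          apply he
          rw [zero_smul, add_zero] at hwz
          rw [← hwz]; exact hw
        have hv : v = c⁻¹ • (ev p n hn) - c⁻¹ • w := by
          rw [← hwz]
          rw [smul_add, smul_smul, inv_mul_cancel₀ hc, one_smul]
          abel
        refine ⟨?_, h2⟩
        rw [hv]
        apply Submodule.sub_mem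
        · exact Submodule.smul_mem _ _ (Submodule.mem_sup_right (Submodule.mem_span_singleton_self _))
        · exact Submodule.smul_mem _ _ (Submodule.mem_sup_left hw)
      · rintro ⟨h1, h2⟩
        refine ⟨hsup_le h1, h2, ?_⟩
        rcases Submodule.mem_sup.1 h1 with ⟨w, hw, z, hz, hwz⟩
        rcases Submodule.mem_span_singleton.1 hz with ⟨c, rfl⟩
        have hc : c ≠ 0 := by
          rintro rfl
          apply h2
          rw [zero_smul, add_zero] at hwz
          rw [← hwz]; exact hw
        have hev : ev p n hn = c⁻¹ • v - c⁻¹ • w := by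
          rw [← hwz, smul_add, smul_smul, inv_mul_cancel₀ hc, one_smul]
          abel
        rw [hev]
        apply Submodule.sub_mem
        · exact Submodule.smul_mem _ _ (Submodule.mem_sup_right (Submodule.mem_span_singleton_self _))
        · exact Submodule.smul_mem _ _ (Submodule.mem_sup_left hw)
  rw [Nat.card_congr e]
  have hc := card_diff p n (le_sup_left : W ≤ W ⊔ Submodule.span K {ev p n hn})
  rw [hW.2.2, finrank_sup_ev_of_not_mem p n hn he, hW.2.2] at hc
  exact hc

lemma fiber_B_of_not_mem {k : ℕ} {W : Submodule K V} (hW : scond p n hn k W)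
    (he : ev p n hn ∉ W) :
    Nat.card {v : V // v ∈ UW p n hn W ∧ v ∉ W ∧
        ev p n hn ∉ W ⊔ Submodule.span K {v}} + p ^ (k + 1) = p ^ (2 * n - (k + 1)) := by
  have hsup_le : W ⊔ Submodule.span K {ev p n hn} ≤ UW p n hn W :=
    sup_le (W_le_UW p n hn hW) ((Submodule.span_singleton_le_iff_mem _ _).2 (ev_mem_UW p n hn hW))
  have e : {v : V // v ∈ UW p n hn W ∧ v ∉ W ∧ ev p n hn ∉ W ⊔ Submodule.span K {v}}
      ≃ {v : V // v ∈ UW p n hn W ∧ v ∉ (W ⊔ Submodule.span K {ev p n hn} : Submodule K V)} :=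
    Equiv.subtypeEquivRight fun v => by
      constructor
      · rintro ⟨h1, h2, h3⟩
        refine ⟨h1, fun hv => ?_⟩
        rcases Submodule.mem_sup.1 hv with ⟨w, hw, z, hz, hwz⟩
        rcases Submodule.mem_span_singleton.1 hz with ⟨c, rfl⟩
        rcases eq_or_ne c 0 with rfl | hc
        · apply h2; rw [zero_smul, add_zero] at hwz; rw [← hwz]; exact hw
        · apply h3
          have hev : ev p n hn = c⁻¹ • v - c⁻¹ • w := by
            rw [← hwz, smul_add, smul_smul, inv_mul_cancel₀ hc, one_smul]
            abel
          rw [hev]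
          apply Submodule.sub_mem
          · exact Submodule.smul_mem _ _
              (Submodule.mem_sup_right (Submodule.mem_span_singleton_self _))
          · exact Submodule.smul_mem _ _ (Submodule.mem_sup_left hw)
      · rintro ⟨h1, h2⟩
        refine ⟨h1, fun hv => h2 (Submodule.mem_sup_left hv), fun hev => ?_⟩
        rcases Submodule.mem_sup.1 hev with ⟨w, hw, z, hz, hwz⟩
        rcases Submodule.mem_span_singleton.1 hz with ⟨c, rfl⟩
        rcases eq_or_ne c 0 with rfl | hc
        · apply he; rw [zero_smul, add_zero] at hwz; rw [← hwz]; exact hw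
        · apply h2
          have hv : v = c⁻¹ • (ev p n hn) - c⁻¹ • w := by
            rw [← hwz, smul_add, smul_smul, inv_mul_cancel₀ hc, one_smul]
            abel
          rw [hv]
          apply Submodule.sub_mem
          · exact Submodule.smul_mem _ _
              (Submodule.mem_sup_right (Submodule.mem_span_singleton_self _))
          · exact Submodule.smul_mem _ _ (Submodule.mem_sup_left hw)
  rw [Nat.card_congr e]
  have hfr := UW_finrank p n hn W
  rw [finrank_sup_ev_of_not_mem p n hn he, hW.2.2] at hfr
  have hc := card_diff p n hsup_le
  rw [finrank_sup_ev_of_not_mem p n hn he, hW.2.2] at hc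
  have : Module.finrank K (UW p n hn W) = 2 * n - (k + 1) := by omega
  rw [this] at hc
  exact hc

end Chunk7
end IsoCnt

namespace IsoCnt
section Chunk8
variable (p n : ℕ) [Fact p.Prime] (hn : 0 < n)
local notation "K" => ZMod p
local notation "V" => (Fin n ⊕ Fin n → ZMod p)

/-- number of isotropic tuples whose span contains `ev`. -/
noncomputable def TA (k : ℕ) : ℕ :=
  Nat.card {t : Fin k → V // tcond p n hn k t ∧ ev p n hn ∈ Submodule.span K (Set.range t)}

noncomputable def TB (k : ℕ) : ℕ :=
  Nat.card {t : Fin k → V // tcond p n hn k t ∧ ev p n hn ∉ Submodule.span K (Set.range t)}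

noncomputable def SA (k : ℕ) : ℕ :=
  Nat.card {W : Submodule K V // scond p n hn k W ∧ ev p n hn ∈ W}

noncomputable def SB (k : ℕ) : ℕ :=
  Nat.card {W : Submodule K V // scond p n hn k W ∧ ev p n hn ∉ W}

lemma TA_eq (k : ℕ) : TA p n hn k = SA p n hn k * ∏ i ∈ Finset.range k, (p ^ k - p ^ i) := by
  unfold TA SA
  exact tcount p n hn k (fun W => ev p n hn ∈ W)

lemma TB_eq (k : ℕ) : TB p n hn k = SB p n hn k * ∏ i ∈ Finset.range k, (p ^ k - p ^ i) := by
  unfold TB SB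
  exact tcount p n hn k (fun W => ev p n hn ∉ W)

lemma TA_zero : TA p n hn 0 = 0 := by
  rw [TA, Nat.card_eq_zero]
  left
  refine ⟨fun t => ?_⟩
  have h := t.2.2
  rw [Set.range_eq_empty, Submodule.span_empty, Submodule.mem_bot] at h
  exact ev_ne_zero p n hn h

lemma TB_zero : TB p n hn 0 = 1 := by
  rw [TB]
  have h0 : tcond p n hn 0 (fun i : Fin 0 => (0 : Fin n ⊕ Fin n → ZMod p)) := by
    refine ⟨linearIndependent_empty_type, fun i => i.elim0, fun i => i.elim0⟩
  have hev : ev p n hn ∉ Submodule.span K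
      (Set.range (fun i : Fin 0 => (0 : Fin n ⊕ Fin n → ZMod p))) := by
    rw [Set.range_eq_empty, Submodule.span_empty, Submodule.mem_bot]
    exact ev_ne_zero p n hn
  haveI : Unique {t : Fin 0 → V // tcond p n hn 0 t ∧
      ev p n hn ∉ Submodule.span K (Set.range t)} :=
    { default := ⟨fun i => 0, h0, hev⟩
      uniq := fun t => Subtype.ext (funext fun i => i.elim0) }
  exact Nat.card_unique

lemma TA_succ (k : ℕ) :
    TA p n hn (k + 1)
      = TA p n hn k * (p ^ (2*n-k) - p ^ k) + TB p n hn k * (p ^ (k+1) - p ^ k) := by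
  classical
  rw [TA, tcard_succ p n hn k (fun W => ev p n hn ∈ W)]
  have hsum : ∀ t : {t : Fin k → V // tcond p n hn k t},
      Nat.card {v : Fin n ⊕ Fin n → ZMod p //
          v ∈ UW p n hn (Submodule.span K (Set.range t.1)) ∧
          v ∉ Submodule.span K (Set.range t.1) ∧
          ev p n hn ∈ Submodule.span K (Set.range t.1) ⊔ Submodule.span K {v}}
        = if ev p n hn ∈ Submodule.span K (Set.range t.1)
            then (p ^ (2*n-k) - p ^ k) else (p ^ (k+1) - p ^ k) := by
    intro t
    have hW := scond_span p n hn t.2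
    split_ifs with he
    · have := fiber_A_of_mem p n hn hW he; omega
    · have := fiber_A_of_not_mem p n hn hW he; omega
  rw [Finset.sum_congr rfl (fun t _ => hsum t), Finset.sum_ite, Finset.sum_const,
    Finset.sum_const, smul_eq_mul, smul_eq_mul]
  have h1 : (Finset.univ.filter (fun t : {t : Fin k → V // tcond p n hn k t} =>
      ev p n hn ∈ Submodule.span K (Set.range t.1))).card = TA p n hn k := by
    rw [TA, Nat.card_congr (Equiv.subtypeSubtypeEquivSubtypeInter
      (fun t : Fin k → V => tcond p n hn k t)
      (fun t => ev p n hn ∈ Submodule.span K (Set.range t))).symm,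
      Nat.card_eq_fintype_card, Fintype.card_subtype]
  have h2 : (Finset.univ.filter (fun t : {t : Fin k → V // tcond p n hn k t} =>
      ¬ ev p n hn ∈ Submodule.span K (Set.range t.1))).card = TB p n hn k := by
    rw [TB, Nat.card_congr (Equiv.subtypeSubtypeEquivSubtypeInter
      (fun t : Fin k → V => tcond p n hn k t)
      (fun t => ev p n hn ∉ Submodule.span K (Set.range t))).symm,
      Nat.card_eq_fintype_card, Fintype.card_subtype]
  rw [h1, h2]

lemma TB_succ (k : ℕ) :
    TB p n hn (k + 1) = TB p n hn k * (p ^ (2*n-(k+1)) - p ^ (k+1)) := by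
  classical
  rw [TB, tcard_succ p n hn k (fun W => ev p n hn ∉ W)]
  have hsum : ∀ t : {t : Fin k → V // tcond p n hn k t},
      Nat.card {v : Fin n ⊕ Fin n → ZMod p //
          v ∈ UW p n hn (Submodule.span K (Set.range t.1)) ∧
          v ∉ Submodule.span K (Set.range t.1) ∧
          ev p n hn ∉ Submodule.span K (Set.range t.1) ⊔ Submodule.span K {v}}
        = if ev p n hn ∈ Submodule.span K (Set.range t.1)
            then 0 else (p ^ (2*n-(k+1)) - p ^ (k+1)) := by
    intro t
    have hW := scond_span p n hn t.2
    split_ifs with he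
    · exact fiber_B_of_mem p n hn hW he
    · have := fiber_B_of_not_mem p n hn hW he; omega
  rw [Finset.sum_congr rfl (fun t _ => hsum t), Finset.sum_ite, Finset.sum_const,
    Finset.sum_const, smul_eq_mul, smul_eq_mul, mul_zero, zero_add]
  have h2 : (Finset.univ.filter (fun t : {t : Fin k → V // tcond p n hn k t} =>
      ¬ ev p n hn ∈ Submodule.span K (Set.range t.1))).card = TB p n hn k := by
    rw [TB, Nat.card_congr (Equiv.subtypeSubtypeEquivSubtypeInter
      (fun t : Fin k → V => tcond p n hn k t)
      (fun t => ev p n hn ∉ Submodule.span K (Set.range t))).symm,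
      Nat.card_eq_fintype_card, Fintype.card_subtype]
  rw [h2]

end Chunk8
end IsoCnt

namespace IsoCnt
section Chunk9
variable (p n : ℕ) [Fact p.Prime] (hn : 0 < n)
local notation "K" => ZMod p
local notation "V" => (Fin n ⊕ Fin n → ZMod p)

lemma hp2 : 2 ≤ p := (Fact.out : p.Prime).two_le

lemma cast_G (k : ℕ) :
    (∏ i ∈ Finset.range k, ((p ^ k - p ^ i : ℕ) : ℤ)) = F (p : ℤ) k k := by
  rw [F]
  apply Finset.prod_congr rfl
  intro i hi
  have hik : i ≤ k := le_of_lt (Finset.mem_range.1 hi)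
  rw [Nat.cast_sub (Nat.pow_le_pow_right (by have := hp2 p; omega) hik)]
  push_cast
  ring

lemma cast_pow_sub {a b : ℕ} (h : b ≤ a) :
    ((p ^ a - p ^ b : ℕ) : ℤ) = (p : ℤ) ^ a - (p : ℤ) ^ b := by
  rw [Nat.cast_sub (Nat.pow_le_pow_right (by have := hp2 p; omega) h)]
  push_cast
  ring

lemma aux_ne (k : ℕ) : (((p : ℤ) ^ (k+1) - 1) * (p : ℤ) ^ k) ≠ 0 := by
  have h2 : (2 : ℤ) ≤ (p : ℤ) := by exact_mod_cast hp2 p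
  have h1 : (2 : ℤ) ≤ (p : ℤ) ^ (k+1) := le_trans h2 (le_self_pow₀ (by omega) (by omega))
  have hp0 : (0 : ℤ) < (p : ℤ) ^ k := pow_pos (by omega) k
  intro h
  rcases mul_eq_zero.1 h with h | h <;> omega

lemma SA_rec (k : ℕ) (hk : k + 1 ≤ n) :
    (SA p n hn (k+1) : ℤ) * (((p : ℤ) ^ (k+1) - 1) * (p : ℤ) ^ k) * F (p : ℤ) k k
      = ((SA p n hn k : ℤ) * ((p : ℤ) ^ (2*n-k) - (p : ℤ) ^ k)
          + (SB p n hn k : ℤ) * ((p : ℤ) ^ (k+1) - (p : ℤ) ^ k)) * F (p : ℤ) k k := by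
  have h := TA_succ p n hn k
  rw [TA_eq, TA_eq, TB_eq] at h
  have hz := congrArg (Nat.cast : ℕ → ℤ) h
  push_cast at hz
  rw [cast_G, cast_G, cast_pow_sub p (show k ≤ 2*n-k by omega),
    cast_pow_sub p (show k ≤ k+1 by omega)] at hz
  rw [F_succ_succ] at hz
  calc (SA p n hn (k+1) : ℤ) * (((p : ℤ) ^ (k+1) - 1) * (p : ℤ) ^ k) * F (p : ℤ) k k
      = (SA p n hn (k+1) : ℤ) * (((p : ℤ) ^ (k+1) - 1) * (p : ℤ) ^ k * F (p : ℤ) k k) := by ring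
    _ = _ := by rw [hz]; ring

lemma SB_rec (k : ℕ) (hk : k + 1 ≤ n) :
    (SB p n hn (k+1) : ℤ) * (((p : ℤ) ^ (k+1) - 1) * (p : ℤ) ^ k) * F (p : ℤ) k k
      = ((SB p n hn k : ℤ) * ((p : ℤ) ^ (2*n-(k+1)) - (p : ℤ) ^ (k+1))) * F (p : ℤ) k k := by
  have h := TB_succ p n hn k
  rw [TB_eq, TB_eq] at h
  have hz := congrArg (Nat.cast : ℕ → ℤ) h
  push_cast at hz
  rw [cast_G, cast_G, cast_pow_sub p (show k+1 ≤ 2*n-(k+1) by omega)] at hz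
  rw [F_succ_succ] at hz
  calc (SB p n hn (k+1) : ℤ) * (((p : ℤ) ^ (k+1) - 1) * (p : ℤ) ^ k) * F (p : ℤ) k k
      = (SB p n hn (k+1) : ℤ) * (((p : ℤ) ^ (k+1) - 1) * (p : ℤ) ^ k * F (p : ℤ) k k) := by ring
    _ = _ := by rw [hz]; ring

/-- `Q_j = ∏_{i=1}^{j} (p^{n-i}+1)`. -/
def Qp (j : ℕ) : ℕ := ∏ i ∈ Finset.Icc 1 j, (p ^ (n - i) + 1)

lemma Qp_zero : Qp p n 0 = 1 := by
  rw [Qp, Finset.Icc_eq_empty (by omega), Finset.prod_empty]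

lemma Qp_succ (j : ℕ) : Qp p n (j+1) = Qp p n j * (p ^ (n - (j+1)) + 1) := by
  rw [Qp, Qp, ← Finset.prod_Icc_succ_top (by omega)]

def Afm : ℕ → ℕ
  | 0 => 0
  | k + 1 => gaussBinom p (n-1) k * Qp p n k

def Bfm (k : ℕ) : ℕ := p ^ k * gaussBinom p (n-1) k * Qp p n k

lemma SA_zero : SA p n hn 0 = 0 := by
  rw [SA, Nat.card_eq_zero]
  left
  refine ⟨fun W => ?_⟩
  have hbot : W.1 = ⊥ := Submodule.finrank_eq_zero.1 W.2.1.2.2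
  have := W.2.2
  rw [hbot, Submodule.mem_bot] at this
  exact ev_ne_zero p n hn this

lemma SB_zero : SB p n hn 0 = 1 := by
  rw [SB]
  have hsc : scond p n hn 0 (⊥ : Submodule K V) := by
    refine ⟨?_, bot_le, finrank_bot _ _⟩
    intro v hv w hw
    rw [Submodule.mem_bot] at hv
    rw [hv, map_zero, LinearMap.zero_apply]
  have hev : ev p n hn ∉ (⊥ : Submodule K V) := by
    rw [Submodule.mem_bot]
    exact ev_ne_zero p n hn
  haveI : Unique {W : Submodule K V // scond p n hn 0 W ∧ ev p n hn ∉ W} :=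
    { default := ⟨⊥, hsc, hev⟩
      uniq := fun W => Subtype.ext (Submodule.finrank_eq_zero.1 W.2.1.2.2) }
  exact Nat.card_unique

lemma closed_form : ∀ k : ℕ, k ≤ n → SA p n hn k = Afm p n k ∧ SB p n hn k = Bfm p n k := by
  intro k
  induction k with
  | zero =>
    intro _
    refine ⟨SA_zero p n hn, ?_⟩
    rw [SB_zero, Bfm, gb_zero, Qp_zero]
    simp
  | succ k ih =>
    intro hk
    obtain ⟨hA, hB⟩ := ih (by omega)
    have hne := aux_ne p k
    have hFne : F (p : ℤ) k k ≠ 0 :=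
      F_self_ne_zero (by exact_mod_cast hp2 p) k
    set q : ℤ := (p : ℤ) with hq
    set m : ℕ := n - 1 - k with hm
    have hn1 : n - 1 = k + m := by omega
    have hnk1 : n - (k+1) = m := by omega
    have h2nk : 2*n - k = k + 2*m + 2 := by omega
    have h2nk1 : 2*n - (k+1) = k + 2*m + 1 := by omega
    have hgb : (gaussBinom p (n-1) (k + 1) : ℤ) * (q ^ (k+1) - 1) * q ^ k
        = (gaussBinom p (n-1) k : ℤ) * (q ^ (n-1) - q ^ k) := gb_step (hp2 p) (n-1) k
    rw [hn1] at hgb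
    constructor
    · -- SA (k+1) = Afm (k+1)
      have hrec := SA_rec p n hn k hk
      have hcan := mul_right_cancel₀ hFne hrec
      rw [hA, hB] at hcan
      have key : (SA p n hn (k+1) : ℤ) * ((q ^ (k+1) - 1) * q ^ k)
          = ((Afm p n (k+1) : ℤ)) * ((q ^ (k+1) - 1) * q ^ k) := by
        rw [hcan]
        rw [show Afm p n (k+1) = gaussBinom p (n-1) k * Qp p n k from rfl]
        rw [h2nk]
        match k, hm with
        | 0, _ =>
          rw [show Afm p n 0 = 0 from rfl, show Bfm p n 0 = p^0 * gaussBinom p (n-1) 0 * Qp p n 0 from rfl,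
            gb_zero, Qp_zero]
          push_cast
          ring
        | (j+1), _ =>
          have hgbj : (gaussBinom p (n-1) (j + 1) : ℤ) * (q ^ (j+1) - 1) * q ^ j
              = (gaussBinom p (n-1) j : ℤ) * (q ^ (n-1) - q ^ j) := gb_step (hp2 p) (n-1) j
          have hn1j : n - 1 = j + 1 + m := by omega
          rw [hn1j] at hgbj
          rw [show Afm p n (j+1) = gaussBinom p (n-1) j * Qp p n j from rfl]
          rw [Bfm, Qp_succ]
          rw [hn1j, show n - (j+1) = m + 1 by omega]
          push_cast
          linear_combination (-(Qp p n j : ℤ) * (q ^ (m+1) + 1) * q) * hgbj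
      exact Nat.cast_injective (mul_right_cancel₀ hne key)
    · -- SB (k+1) = Bfm (k+1)
      have hrec := SB_rec p n hn k hk
      have hcan := mul_right_cancel₀ hFne hrec
      rw [hB] at hcan
      have key : (SB p n hn (k+1) : ℤ) * ((q ^ (k+1) - 1) * q ^ k)
          = ((Bfm p n (k+1) : ℤ)) * ((q ^ (k+1) - 1) * q ^ k) := by
        rw [hcan]
        rw [Bfm, Bfm, Qp_succ, hnk1, h2nk1, hn1]
        push_cast
        linear_combination (-(q : ℤ) ^ (k+1) * ((q ^ m + 1)) * (Qp p n k : ℤ)) * hgb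
      exact Nat.cast_injective (mul_right_cancel₀ hne key)

end Chunk9
end IsoCnt

namespace IsoCnt
section Chunk10
variable (p n : ℕ) [Fact p.Prime] (hn : 0 < n)
local notation "K" => ZMod p
local notation "V" => (Fin n ⊕ Fin n → ZMod p)

lemma S_split (k : ℕ) :
    Nat.card {W : Submodule K V // scond p n hn k W} = SA p n hn k + SB p n hn k := by
  classical
  rw [SA, SB]
  rw [Nat.card_congr (Equiv.sumCompl
    (fun W : {W : Submodule K V // scond p n hn k W} => ev p n hn ∈ W.1)).symm,
    Nat.card_sum]
  congr 1
  · exact Nat.card_congr (Equiv.subtypeSubtypeEquivSubtypeInter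
      (fun W : Submodule K V => scond p n hn k W) (fun W => ev p n hn ∈ W))
  · exact Nat.card_congr (Equiv.subtypeSubtypeEquivSubtypeInter
      (fun W : Submodule K V => scond p n hn k W) (fun W => ev p n hn ∉ W))

lemma scond_iff (k : ℕ) (W : Submodule K V) :
    ((∀ v ∈ W, ∀ w ∈ W, v ⬝ᵥ (Delta p n *ᵥ w) = 0) ∧
      (∀ v ∈ W, v (Sum.inl ⟨0, hn⟩) = 0) ∧
      Module.finrank (ZMod p) W = k) ↔ scond p n hn k W := by
  unfold scond
  constructor
  · rintro ⟨h1, h2, h3⟩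
    exact ⟨fun v hv w hw => by rw [Bf_apply]; exact h1 v hv w hw, fun v hv => h2 v hv, h3⟩
  · rintro ⟨h1, h2, h3⟩
    exact ⟨fun v hv w hw => by rw [← Bf_apply]; exact h1 v hv w hw, fun v hv => h2 hv, h3⟩

lemma count_eq (k : ℕ) :
    Nat.card {W : Submodule (ZMod p) (Fin n ⊕ Fin n → ZMod p) //
        (∀ v ∈ W, ∀ w ∈ W, v ⬝ᵥ (Delta p n *ᵥ w) = 0) ∧
        (∀ v ∈ W, v (Sum.inl ⟨0, hn⟩) = 0) ∧
        Module.finrank (ZMod p) W = k} = SA p n hn k + SB p n hn k := by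
  rw [← S_split]
  exact Nat.card_congr (Equiv.subtypeEquivRight (scond_iff p n hn k))

lemma geom_add (a b : ℕ) :
    ∑ i ∈ Finset.range (a + b), p ^ i
      = (∑ i ∈ Finset.range a, p ^ i) + p ^ a * ∑ i ∈ Finset.range b, p ^ i := by
  induction b with
  | zero => simp
  | succ b ih =>
    rw [← Nat.add_assoc a b 1, Finset.sum_range_succ, Finset.sum_range_succ, ih, pow_add]
    ring

end Chunk10
end IsoCnt

/-- Polynomial version of `gaussBinom`. -/
noncomputable def gaussPoly : ℕ → ℕ → Polynomial ℕ
  | _, 0 => 1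
  | 0, _ + 1 => 0
  | n + 1, k + 1 => gaussPoly n k + Polynomial.X ^ (k + 1) * gaussPoly n (k + 1)

lemma gaussPoly_eval (q : ℕ) : ∀ m k : ℕ, (gaussPoly m k).eval q = gaussBinom q m k := by
  intro m
  induction m with
  | zero =>
    intro k
    match k with
    | 0 => simp [gaussPoly, gaussBinom]
    | k + 1 => simp [gaussPoly, gaussBinom]
  | succ m ih =>
    intro k
    match k with
    | 0 => simp [gaussPoly, IsoCnt.gb_zero]
    | k + 1 =>
      rw [show gaussPoly (m+1) (k+1)
          = gaussPoly m k + Polynomial.X ^ (k + 1) * gaussPoly m (k + 1) from rfl,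
        show gaussBinom q (m+1) (k+1)
          = gaussBinom q m k + q ^ (k + 1) * gaussBinom q m (k + 1) from rfl]
      simp [ih, Polynomial.eval_add, Polynomial.eval_mul, Polynomial.eval_pow]

theorem card_isotropic_subspaces_in_hyperplane (p n : ℕ) [Fact p.Prime] (hodd : Odd p)
    (hn : 0 < n) :
    (Nat.card {W : Submodule (ZMod p) (Fin n ⊕ Fin n → ZMod p) //
        (∀ v ∈ W, ∀ w ∈ W, v ⬝ᵥ (Delta p n *ᵥ w) = 0) ∧
        (∀ v ∈ W, v (Sum.inl ⟨0, hn⟩) = 0) ∧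
        Module.finrank (ZMod p) W = 0} = 1) ∧
    (Nat.card {W : Submodule (ZMod p) (Fin n ⊕ Fin n → ZMod p) //
        (∀ v ∈ W, ∀ w ∈ W, v ⬝ᵥ (Delta p n *ᵥ w) = 0) ∧
        (∀ v ∈ W, v (Sum.inl ⟨0, hn⟩) = 0) ∧
        Module.finrank (ZMod p) W = 1} = ∑ i ∈ Finset.range (2 * n - 1), p ^ i) ∧
    (∀ k : ℕ, 2 ≤ k → k ≤ n →
      Nat.card {W : Submodule (ZMod p) (Fin n ⊕ Fin n → ZMod p) //
          (∀ v ∈ W, ∀ w ∈ W, v ⬝ᵥ (Delta p n *ᵥ w) = 0) ∧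
          (∀ v ∈ W, v (Sum.inl ⟨0, hn⟩) = 0) ∧
          Module.finrank (ZMod p) W = k}
        = (p ^ k * (p ^ (n - k) + 1) * gaussBinom p (n - 1) k
            + gaussBinom p (n - 1) (k - 1))
          * ∏ i ∈ Finset.Icc 1 (k - 1), (p ^ (n - i) + 1) ∧
      ∃ P : Polynomial ℕ, ∀ q : ℕ,
        P.eval q = (q ^ k * (q ^ (n - k) + 1) * gaussBinom q (n - 1) k
            + gaussBinom q (n - 1) (k - 1))
          * ∏ i ∈ Finset.Icc 1 (k - 1), (q ^ (n - i) + 1)) := by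
  refine ⟨?_, ?_, ?_⟩
  · rw [IsoCnt.count_eq p n hn 0]
    obtain ⟨hA, hB⟩ := IsoCnt.closed_form p n hn 0 (by omega)
    rw [hA, hB, show IsoCnt.Afm p n 0 = 0 from rfl, IsoCnt.Bfm, IsoCnt.gb_zero,
      IsoCnt.Qp_zero]
    simp
  · rw [IsoCnt.count_eq p n hn 1]
    obtain ⟨hA, hB⟩ := IsoCnt.closed_form p n hn 1 hn
    have hq1 : IsoCnt.Qp p n 1 = p ^ (n-1) + 1 := by
      rw [IsoCnt.Qp, Finset.Icc_self, Finset.prod_singleton]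
    rw [hA, hB, show IsoCnt.Afm p n 1 = gaussBinom p (n-1) 0 * IsoCnt.Qp p n 0 from rfl,
      IsoCnt.Bfm, IsoCnt.gb_zero, IsoCnt.Qp_zero, IsoCnt.gb_one, hq1]
    rw [show 2*n-1 = 1 + ((n-1)+(n-1)) by omega, IsoCnt.geom_add, IsoCnt.geom_add,
      Finset.sum_range_one]
    ring
  · intro k hk2 hkn
    obtain ⟨j, rfl⟩ : ∃ j, k = j + 1 := ⟨k-1, by omega⟩
    constructor
    · rw [IsoCnt.count_eq p n hn (j+1)]
      obtain ⟨hA, hB⟩ := IsoCnt.closed_form p n hn (j+1) hkn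
      rw [hA, hB, show IsoCnt.Afm p n (j+1) = gaussBinom p (n-1) j * IsoCnt.Qp p n j from rfl,
        IsoCnt.Bfm, IsoCnt.Qp_succ, show (j+1) - 1 = j by omega,
        show (∏ i ∈ Finset.Icc 1 j, (p ^ (n - i) + 1)) = IsoCnt.Qp p n j from rfl]
      ring
    · refine ⟨(Polynomial.X ^ (j+1) * (Polynomial.X ^ (n-(j+1)) + 1) * gaussPoly (n-1) (j+1)
          + gaussPoly (n-1) ((j+1)-1))
          * ∏ i ∈ Finset.Icc 1 ((j+1)-1), (Polynomial.X ^ (n-i) + 1), fun q => ?_⟩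
      simp [Polynomial.eval_mul, Polynomial.eval_add, Polynomial.eval_pow,
        Polynomial.eval_prod, gaussPoly_eval]
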